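/- Let R be a commutative ℚ-algebra, N ≥ 1 an integer, and c_1,…,c_N ∈ R. In the formal power series ring R[[u,w]] set F := ∑_{k=1}^N c_k·u^k and G := ∑_{k=1}^N c_k·∑_{m≥0} binom(k+m−1, m)·u^{k+m}·w^m. (Writing u = z^{−1}, F corresponds to f(z) = ∑_k c_k z^{−k} and G to the expansion of f(z−w) in the domain |z| > |w|.) Both F and G lie in the ideal generated by u, so exp(−G) and exp(F) are well defined in R[[u,w]]. Then exp(−G)·exp(F) lies in R[u][[w]]; that is, for every m ≥ 0 the coefficient of w^m in exp(−G)·exp(F), a priori an element of R[[u]], is a polynomial in u. -/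

import Mathlib

/-!
STATEMENT 3.
Let R be a commutative ℚ-algebra, N ≥ 1 an integer, and c_1,…,c_N ∈ R.
In R[[u,w]] (= `MvPowerSeries (Fin 2) R`, with u the variable of index 0
and w the variable of index 1), set
  F := ∑_{k=1}^N c_k·u^k,
  G := ∑_{k=1}^N c_k·∑_{m≥0} C(k+m−1, m)·u^{k+m}·w^m
(G is defined coefficientwise below).  Both F and G lie in the ideal (u),
so exp(−G) and exp(F) are well defined; `expPS` below computes, for a series
with zero constant term, the sum ∑_{n≥0} f^n/n! (the truncation used is exact
in that case, since coeff_d (f^n) = 0 for n > |d|).  Then exp(−G)·exp(F) lies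
in R[u][[w]]: for every m ≥ 0 the coefficient of w^m is a polynomial in u,
i.e. only finitely many of its u-coefficients are nonzero.
-/

noncomputable section

variable (R : Type*) [CommRing R] [Algebra ℚ R]

/-- The exponential `∑_{n≥0} f^n / n!` of a power series `f` with zero constant
term (for such `f`, `coeff d (f^n) = 0` whenever `n > d 0 + d 1`, so the
truncated sum below equals the full exponential series). -/
def expPS (f : MvPowerSeries (Fin 2) R) : MvPowerSeries (Fin 2) R :=
  fun d => ∑ n ∈ Finset.range (d 0 + d 1 + 1),
    algebraMap ℚ R ((n.factorial : ℚ))⁻¹ * MvPowerSeries.coeff (R := R) d (f ^ n)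

/-- `F = ∑_{k=1}^N c_k u^k`. -/
def Fser (N : ℕ) (c : ℕ → R) : MvPowerSeries (Fin 2) R :=
  ∑ k ∈ Finset.Icc 1 N,
    MvPowerSeries.C (σ := Fin 2) (R := R) (c k) * MvPowerSeries.X (0 : Fin 2) ^ k

/-- `G = ∑_{k=1}^N c_k ∑_{m≥0} C(k+m−1, m) u^{k+m} w^m`, given coefficientwise:
the coefficient of `u^i w^m` is `C(i−1, m)·c_{i−m}` when `m+1 ≤ i` and
`i−m ≤ N`, and `0` otherwise. -/
def Gser (N : ℕ) (c : ℕ → R) : MvPowerSeries (Fin 2) R :=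
  fun d =>
    if d 1 + 1 ≤ d 0 ∧ d 0 - d 1 ≤ N then
      (Nat.choose (d 0 - 1) (d 1)) • c (d 0 - d 1)
    else 0

set_option linter.unusedSectionVars false
section Aux
variable {R}


lemma fin2_sum_pos {q : Fin 2 →₀ ℕ} (hq : q ≠ 0) : 1 ≤ q 0 + q 1 := by
  by_contra h
  push_neg at h
  apply hq
  ext i
  fin_cases i <;> simp <;> omega

lemma coeff_pow_vanish (f : MvPowerSeries (Fin 2) R)
    (hf : MvPowerSeries.coeff (R := R) 0 f = 0) :
    ∀ n (d : Fin 2 →₀ ℕ), d 0 + d 1 < n → MvPowerSeries.coeff (R := R) d (f ^ n) = 0 := by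
  intro n
  induction n with
  | zero => intro d hd; omega
  | succ n ih =>
    intro d hd
    rw [pow_succ, MvPowerSeries.coeff_mul]
    apply Finset.sum_eq_zero
    rintro ⟨p, q⟩ hpq
    rw [Finset.HasAntidiagonal.mem_antidiagonal] at hpq
    have h0 : p 0 + q 0 = d 0 := by rw [← hpq]; simp
    have h1 : p 1 + q 1 = d 1 := by rw [← hpq]; simp
    by_cases hq : q = 0
    · subst hq; rw [hf, mul_zero]
    · have := fin2_sum_pos hq
      rw [ih p (by omega), zero_mul]

lemma coeff_pow_vanish_slope (N : ℕ) (f : MvPowerSeries (Fin 2) R)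
    (hf : ∀ d : Fin 2 →₀ ℕ, (N + 1) * d 1 < d 0 → MvPowerSeries.coeff (R := R) d f = 0) :
    ∀ n (d : Fin 2 →₀ ℕ), (N + 1) * d 1 < d 0 → MvPowerSeries.coeff (R := R) d (f ^ n) = 0 := by
  intro n
  induction n with
  | zero =>
    intro d hd
    rw [pow_zero, MvPowerSeries.coeff_one, if_neg]
    intro h
    rw [h] at hd
    simp at hd
  | succ n ih =>
    intro d hd
    rw [pow_succ, MvPowerSeries.coeff_mul]
    apply Finset.sum_eq_zero
    rintro ⟨p, q⟩ hpq
    rw [Finset.HasAntidiagonal.mem_antidiagonal] at hpq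
    have h0 : p 0 + q 0 = d 0 := by rw [← hpq]; simp
    have h1 : p 1 + q 1 = d 1 := by rw [← hpq]; simp
    by_cases hp : (N + 1) * p 1 < p 0
    · rw [ih p hp, zero_mul]
    · have hq : (N + 1) * q 1 < q 0 := by push_neg at hp; nlinarith [hd, h0, h1]
      rw [hf q hq, mul_zero]


lemma coeff_expPS (f : MvPowerSeries (Fin 2) R) (d : Fin 2 →₀ ℕ) :
    MvPowerSeries.coeff (R := R) d (expPS R f)
      = ∑ n ∈ Finset.range (d 0 + d 1 + 1),
          algebraMap ℚ R ((n.factorial : ℚ))⁻¹ * MvPowerSeries.coeff (R := R) d (f ^ n) := rfl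

lemma coeff_expPS_ext (f : MvPowerSeries (Fin 2) R)
    (hf : MvPowerSeries.coeff (R := R) 0 f = 0) (d : Fin 2 →₀ ℕ) (W : ℕ) (hW : d 0 + d 1 ≤ W) :
    MvPowerSeries.coeff (R := R) d (expPS R f)
      = ∑ n ∈ Finset.range (W + 1),
          algebraMap ℚ R ((n.factorial : ℚ))⁻¹ * MvPowerSeries.coeff (R := R) d (f ^ n) := by
  rw [coeff_expPS]
  apply Finset.sum_subset (Finset.range_subset_range.mpr (by omega))
  intro n _ hn
  rw [Finset.mem_range, not_lt] at hn
  rw [coeff_pow_vanish f hf n d (by omega), mul_zero]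

lemma coeff_mul_pow_vanish (f g : MvPowerSeries (Fin 2) R)
    (hf : MvPowerSeries.coeff (R := R) 0 f = 0) (hg : MvPowerSeries.coeff (R := R) 0 g = 0)
    (d : Fin 2 →₀ ℕ) (a b : ℕ) (h : d 0 + d 1 < a + b) :
    MvPowerSeries.coeff (R := R) d (f ^ a * g ^ b) = 0 := by
  rw [MvPowerSeries.coeff_mul]
  apply Finset.sum_eq_zero
  rintro ⟨p, q⟩ hpq
  rw [Finset.HasAntidiagonal.mem_antidiagonal] at hpq
  have h0 : p 0 + q 0 = d 0 := by rw [← hpq]; simp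
  have h1 : p 1 + q 1 = d 1 := by rw [← hpq]; simp
  by_cases hp : p 0 + p 1 < a
  · rw [coeff_pow_vanish f hf a p (by omega), zero_mul]
  · rw [coeff_pow_vanish g hg b q (by omega), mul_zero]

lemma sum_square_eq_sum_tri {M : Type*} [AddCommMonoid M] (W : ℕ) (t : ℕ → ℕ → M)
    (h : ∀ a b, W < a + b → t a b = 0) :
    ∑ a ∈ Finset.range (W + 1), ∑ b ∈ Finset.range (W + 1), t a b
      = ∑ n ∈ Finset.range (W + 1), ∑ p ∈ Finset.HasAntidiagonal.antidiagonal n, t p.1 p.2 := by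
  rw [← Finset.sum_product']
  rw [← Finset.sum_biUnion (by
    intro m _ n _ hmn
    simp only [Finset.disjoint_left]
    intro p hp hp'
    rw [Finset.HasAntidiagonal.mem_antidiagonal] at hp hp'
    exact hmn (hp ▸ hp'))]
  symm
  apply Finset.sum_subset
  · intro p hp
    rw [Finset.mem_biUnion] at hp
    obtain ⟨n, hn, hp⟩ := hp
    rw [Finset.mem_range] at hn
    rw [Finset.HasAntidiagonal.mem_antidiagonal] at hp
    rw [Finset.mem_product, Finset.mem_range, Finset.mem_range]
    omega
  · intro p _ hp
    apply h
    by_contra hle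
    push_neg at hle
    exact hp (Finset.mem_biUnion.mpr ⟨p.1 + p.2, Finset.mem_range.mpr (by omega),
      Finset.HasAntidiagonal.mem_antidiagonal.mpr rfl⟩)

lemma alpha_mul (n k : ℕ) (hk : k ≤ n) (t : R) :
    algebraMap ℚ R ((k.factorial : ℚ))⁻¹ * algebraMap ℚ R (((n - k).factorial : ℚ))⁻¹ * t
      = algebraMap ℚ R ((n.factorial : ℚ))⁻¹ * ((n.choose k) • t) := by
  rw [nsmul_eq_mul, ← map_natCast (algebraMap ℚ R) (n.choose k), ← mul_assoc, ← map_mul, ← map_mul]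
  congr 2
  have h := Nat.choose_mul_factorial_mul_factorial hk
  have hq : ((n.choose k : ℚ)) * (k.factorial : ℚ) * ((n - k).factorial : ℚ) = (n.factorial : ℚ) := by
    exact_mod_cast congrArg (Nat.cast : ℕ → ℚ) h
  have hk0 : (k.factorial : ℚ) ≠ 0 := Nat.cast_ne_zero.mpr k.factorial_ne_zero
  have hnk0 : ((n - k).factorial : ℚ) ≠ 0 := Nat.cast_ne_zero.mpr (n - k).factorial_ne_zero
  have hn0 : (n.factorial : ℚ) ≠ 0 := Nat.cast_ne_zero.mpr n.factorial_ne_zero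
  field_simp
  linarith [hq]

lemma expPS_mul (f g : MvPowerSeries (Fin 2) R)
    (hf : MvPowerSeries.coeff (R := R) 0 f = 0) (hg : MvPowerSeries.coeff (R := R) 0 g = 0) :
    expPS R f * expPS R g = expPS R (f + g) := by
  apply MvPowerSeries.ext
  intro d
  set W := d 0 + d 1 with hW
  set α : ℕ → R := fun n => algebraMap ℚ R ((n.factorial : ℚ))⁻¹ with hα
  have key : ∀ p : Fin 2 →₀ ℕ, ∀ q : Fin 2 →₀ ℕ, p + q = d →
      (p 0 + p 1 ≤ W ∧ q 0 + q 1 ≤ W) := by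
    intro p q hpq
    have h0 : p 0 + q 0 = d 0 := by rw [← hpq]; simp
    have h1 : p 1 + q 1 = d 1 := by rw [← hpq]; simp
    omega
  calc MvPowerSeries.coeff (R := R) d (expPS R f * expPS R g)
      = ∑ pq ∈ Finset.HasAntidiagonal.antidiagonal d, ∑ a ∈ Finset.range (W + 1), ∑ b ∈ Finset.range (W + 1),
          (α a * MvPowerSeries.coeff (R := R) pq.1 (f ^ a)) * (α b * MvPowerSeries.coeff (R := R) pq.2 (g ^ b)) := by
        rw [MvPowerSeries.coeff_mul]
        apply Finset.sum_congr rfl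
        intro pq hpq
        rw [Finset.HasAntidiagonal.mem_antidiagonal] at hpq
        obtain ⟨hp, hq⟩ := key pq.1 pq.2 hpq
        rw [coeff_expPS_ext f hf pq.1 W hp, coeff_expPS_ext g hg pq.2 W hq,
          Finset.sum_mul_sum]
    _ = ∑ a ∈ Finset.range (W + 1), ∑ b ∈ Finset.range (W + 1),
          α a * α b * MvPowerSeries.coeff (R := R) d (f ^ a * g ^ b) := by
        rw [Finset.sum_comm]
        apply Finset.sum_congr rfl
        intro a _
        rw [Finset.sum_comm]
        apply Finset.sum_congr rfl
        intro b _
        rw [MvPowerSeries.coeff_mul, Finset.mul_sum]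
        apply Finset.sum_congr rfl
        intro pq _
        ring
    _ = ∑ n ∈ Finset.range (W + 1), ∑ p ∈ Finset.HasAntidiagonal.antidiagonal n,
          α p.1 * α p.2 * MvPowerSeries.coeff (R := R) d (f ^ p.1 * g ^ p.2) := by
        exact sum_square_eq_sum_tri W
          (fun a b => α a * α b * MvPowerSeries.coeff (R := R) d (f ^ a * g ^ b))
          (fun a b hab => by
            rw [coeff_mul_pow_vanish f g hf hg d a b hab, mul_zero])
    _ = ∑ n ∈ Finset.range (W + 1), ∑ k ∈ Finset.range (n + 1),
          α k * α (n - k) * MvPowerSeries.coeff (R := R) d (f ^ k * g ^ (n - k)) := by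
        apply Finset.sum_congr rfl
        intro n _
        rw [Finset.Nat.sum_antidiagonal_eq_sum_range_succ_mk]
    _ = ∑ n ∈ Finset.range (W + 1), α n * MvPowerSeries.coeff (R := R) d ((f + g) ^ n) := by
        apply Finset.sum_congr rfl
        intro n _
        rw [add_pow, map_sum, Finset.mul_sum]
        apply Finset.sum_congr rfl
        intro k hk
        rw [Finset.mem_range] at hk
        have : (f ^ k * g ^ (n - k) * (n.choose k : MvPowerSeries (Fin 2) R))
            = (n.choose k) • (f ^ k * g ^ (n - k)) := by
          rw [nsmul_eq_mul]; ring
        rw [this, map_nsmul]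
        exact alpha_mul n k (by omega) _
    _ = MvPowerSeries.coeff (R := R) d (expPS R (f + g)) := (coeff_expPS (f + g) d).symm



lemma coeff_Fser (N : ℕ) (c : ℕ → R) (d : Fin 2 →₀ ℕ) :
    MvPowerSeries.coeff (R := R) d (Fser R N c)
      = if 1 ≤ d 0 ∧ d 0 ≤ N ∧ d 1 = 0 then c (d 0) else 0 := by
  rw [Fser, map_sum]
  simp only [MvPowerSeries.coeff_C_mul, MvPowerSeries.coeff_X_pow]
  by_cases h1 : d 1 = 0
  · have hd : d = Finsupp.single 0 (d 0) := by
      ext i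
      fin_cases i <;> simp [Finsupp.single_apply] <;> omega
    have hiff : ∀ k, (d = Finsupp.single (0 : Fin 2) k) ↔ d 0 = k := by
      intro k
      constructor
      · intro h'
        have := DFunLike.congr_fun h' (0 : Fin 2)
        simpa [Finsupp.single_apply] using this
      · intro h'
        rw [hd, h']
    simp only [hiff, mul_ite, mul_one, mul_zero]
    rw [Finset.sum_ite_eq (Finset.Icc 1 N) (d 0) c]
    simp only [Finset.mem_Icc, h1, and_true]
  · have : ∀ k ∈ Finset.Icc 1 N, c k * (if d = Finsupp.single (0 : Fin 2) k then 1 else 0) = 0 := by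
      intro k _
      rw [if_neg, mul_zero]
      intro hk
      apply h1
      rw [hk, Finsupp.single_apply, if_neg (by decide)]
    rw [Finset.sum_congr rfl this, Finset.sum_const_zero, if_neg (by tauto)]

lemma coeff_Gser (N : ℕ) (c : ℕ → R) (d : Fin 2 →₀ ℕ) :
    MvPowerSeries.coeff (R := R) d (Gser R N c)
      = if d 1 + 1 ≤ d 0 ∧ d 0 - d 1 ≤ N then
          (Nat.choose (d 0 - 1) (d 1)) • c (d 0 - d 1) else 0 := rfl

lemma coeff_H (N : ℕ) (c : ℕ → R) (d : Fin 2 →₀ ℕ) (h : (N + 1) * d 1 < d 0) :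
    MvPowerSeries.coeff (R := R) d (Fser R N c - Gser R N c) = 0 := by
  rw [map_sub, coeff_Fser, coeff_Gser]
  by_cases h1 : d 1 = 0
  · rw [h1]
    have hd0 : 1 ≤ d 0 := by omega
    by_cases h2 : d 0 ≤ N
    · rw [if_pos ⟨hd0, h2, rfl⟩, if_pos (by omega)]
      simp [Nat.choose]
    · rw [if_neg (by tauto), if_neg (by omega), sub_zero]
  · have hdN : ¬ (d 0 - d 1 ≤ N) := by
      have : N + d 1 ≤ (N + 1) * d 1 := by nlinarith [Nat.one_le_iff_ne_zero.mpr h1]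
      omega
    rw [if_neg (by tauto), if_neg (by tauto), sub_zero]

end Aux

theorem statement3 (N : ℕ) (hN : 1 ≤ N) (c : ℕ → R) :
    ∀ m : ℕ, ∃ B : ℕ, ∀ i : ℕ, B ≤ i →
      MvPowerSeries.coeff (R := R) (Finsupp.single (0 : Fin 2) i + Finsupp.single (1 : Fin 2) m)
        (expPS R (-(Gser R N c)) * expPS R (Fser R N c)) = 0 := by
  intro m
  refine ⟨(N + 1) * m + 1, fun i hi => ?_⟩
  set d := Finsupp.single (0 : Fin 2) i + Finsupp.single (1 : Fin 2) m with hd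
  have hd0 : d 0 = i := by simp [hd, Finsupp.single_apply]
  have hd1 : d 1 = m := by simp [hd, Finsupp.single_apply]
  have hG0 : MvPowerSeries.coeff (R := R) 0 (-(Gser R N c)) = 0 := by
    rw [map_neg, coeff_Gser]
    simp
  have hF0 : MvPowerSeries.coeff (R := R) 0 (Fser R N c) = 0 := by
    rw [coeff_Fser]
    simp
  rw [expPS_mul _ _ hG0 hF0]
  have hsum : -(Gser R N c) + Fser R N c = Fser R N c - Gser R N c := by ring
  rw [hsum, coeff_expPS]
  apply Finset.sum_eq_zero
  intro n _
  rw [coeff_pow_vanish_slope N _ (fun e he => coeff_H N c e he) n d (by rw [hd0, hd1]; omega), mul_zero]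


end
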